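/- Let T be the compact torus ℝ^m/(2π)ℤ^m, let Q: ℝ^n → ℝ^m be a linear map, q: ℝ^n → T the induced map, and let T₀ be the closure of q(ℝ^n) in T. Then T₀ is a closed subgroup (subtorus) of T and for every smooth function f on T and every H₀ ∈ ℝ^n, (1/vol B(H₀,R)) ∫_{B(H₀,R)} f(q(H)) dH converges as R → ∞ to the average of f over T₀ with respect to its Haar probability measure, uniformly in H₀. -/

import Mathlib

open MeasureTheory

noncomputable section Stmt11Aux

open Complex Set Finset

local notation "𝕋" m => (Fin m → AddCircle (2 * Real.pi))

instance stmt11_fact : Fact (0 < 2 * Real.pi) := ⟨by positivity⟩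

/-- The character on the torus indexed by `k : Fin m → ℤ`. -/
def stmt11chi {m : ℕ} (k : Fin m → ℤ) : C(𝕋 m, ℂ) :=
  ∏ i, (fourier (k i)).comp ⟨fun x => x i, continuous_apply i⟩

lemma stmt11chi_apply {m : ℕ} (k : Fin m → ℤ) (x : 𝕋 m) :
    stmt11chi k x = ∏ i, fourier (k i) (x i) := by
  simp [stmt11chi]

lemma stmt11chi_zero {m : ℕ} : stmt11chi (0 : Fin m → ℤ) = 1 := by
  ext x; simp [stmt11chi_apply, fourier_zero]

lemma stmt11chi_mul {m : ℕ} (k l : Fin m → ℤ) :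
    stmt11chi k * stmt11chi l = stmt11chi (k + l) := by
  ext x
  simp only [ContinuousMap.mul_apply, stmt11chi_apply, Pi.add_apply, fourier_add]
  rw [← Finset.prod_mul_distrib]

lemma stmt11chi_star {m : ℕ} (k : Fin m → ℤ) :
    star (stmt11chi k) = stmt11chi (-k) := by
  ext x
  simp only [ContinuousMap.star_apply, stmt11chi_apply, Pi.neg_apply, fourier_neg]
  rw [RCLike.star_def, map_prod]

lemma stmt11chi_apply_add {m : ℕ} (k : Fin m → ℤ) (x y : 𝕋 m) :
    stmt11chi k (x + y) = stmt11chi k x * stmt11chi k y := by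
  simp only [stmt11chi_apply, Pi.add_apply, fourier_apply, smul_add,
    AddCircle.toCircle_add, Circle.coe_mul]
  rw [← Finset.prod_mul_distrib]

/-- The star subalgebra generated by the characters. -/
def stmt11Alg (m : ℕ) : StarSubalgebra ℂ C(𝕋 m, ℂ) where
  toSubalgebra := Algebra.adjoin ℂ (Set.range (stmt11chi (m := m)))
  star_mem' := by
    show Algebra.adjoin ℂ (Set.range (stmt11chi (m := m))) ≤
      star (Algebra.adjoin ℂ (Set.range (stmt11chi (m := m))))
    refine Algebra.adjoin_le ?_
    rintro - ⟨k, rfl⟩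
    exact Algebra.subset_adjoin ⟨-k, (stmt11chi_star k).symm⟩

lemma stmt11Alg_coe (m : ℕ) :
    Subalgebra.toSubmodule (stmt11Alg m).toSubalgebra =
      Submodule.span ℂ (Set.range (stmt11chi (m := m))) := by
  apply Algebra.adjoin_eq_span_of_subset
  refine Subset.trans ?_ Submodule.subset_span
  intro x hx
  refine Submonoid.closure_induction (fun _ => id) ⟨0, stmt11chi_zero⟩ ?_ hx
  rintro - - - - ⟨k, rfl⟩ ⟨l, rfl⟩
  exact ⟨k + l, (stmt11chi_mul k l).symm⟩

lemma stmt11Alg_separatesPoints (m : ℕ) : (stmt11Alg m).SeparatesPoints := by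
  intro x y hxy
  obtain ⟨i, hi⟩ := Function.ne_iff.mp hxy
  refine ⟨_, ⟨stmt11chi (Pi.single i 1), Algebra.subset_adjoin ⟨Pi.single i 1, rfl⟩, rfl⟩, ?_⟩
  have key : ∀ z : 𝕋 m, stmt11chi (Pi.single i 1) z = fourier 1 (z i) := by
    intro z
    rw [stmt11chi_apply]
    rw [Finset.prod_eq_single i (fun j _ hj => by simp [Pi.single_eq_of_ne hj, fourier_zero])
      (by simp)]
    simp
  dsimp only
  rw [key, key, fourier_one, fourier_one]
  intro h
  rw [Circle.coe_inj] at h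
  exact hi (AddCircle.injective_toCircle (by positivity : (0:ℝ) < 2 * Real.pi).ne' h)

lemma stmt11_span_dense (m : ℕ) :
    (Submodule.span ℂ (Set.range (stmt11chi (m := m)))).topologicalClosure = ⊤ := by
  rw [← stmt11Alg_coe]
  exact congr_arg (Subalgebra.toSubmodule <| StarSubalgebra.toSubalgebra ·)
    (ContinuousMap.starSubalgebra_topologicalClosure_eq_top_of_separatesPoints (stmt11Alg m)
      (stmt11Alg_separatesPoints m))

/-- Orthogonality: a nontrivial character integrates to zero against an invariant measure. -/
lemma stmt11_char_integral_zero {G : Type*} [AddGroup G] [TopologicalSpace G]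
    [MeasurableSpace G] [MeasurableAdd G] (μ : Measure G) [μ.IsAddLeftInvariant]
    (φ : G → ℂ) (hom : ∀ x y, φ (x + y) = φ x * φ y) (t : G) (ht : φ t ≠ 1) :
    ∫ x, φ x ∂μ = 0 := by
  have h1 : ∫ x, φ (t + x) ∂μ = ∫ x, φ x ∂μ := integral_add_left_eq_self φ t
  have h2 : ∫ x, φ (t + x) ∂μ = φ t * ∫ x, φ x ∂μ := by
    simp_rw [hom t]
    exact integral_const_mul _ _
  have h3 : (φ t - 1) * ∫ x, φ x ∂μ = 0 := by
    rw [sub_mul, one_mul, ← h2, h1, sub_self]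
  rcases mul_eq_zero.mp h3 with h | h
  · exact absurd (sub_eq_zero.mp h) ht
  · exact h

/-- A continuous function on a compact space is integrable w.r.t. a finite measure. -/
lemma stmt11_integrable {G : Type*} [TopologicalSpace G] [CompactSpace G]
    [MeasurableSpace G] [OpensMeasurableSpace G] (μ : Measure G) [IsFiniteMeasure μ]
    (g : G → ℂ) (hg : Continuous g) :
    Integrable g μ := by
  obtain ⟨C, hC⟩ := isBounded_iff_forall_norm_le.mp (isCompact_range hg).isBounded
  exact ⟨hg.aestronglyMeasurable,
    HasFiniteIntegral.of_bounded (C := C) (Filter.Eventually.of_forall fun x =>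
      hC _ (Set.mem_range_self x))⟩

/-- 1D oscillatory bound. -/
lemma stmt11_oneD_bound (a c : ℝ) (ha : a ≠ 0) {R : ℝ} (hR : 0 < R) :
    ‖∫ t in Metric.ball c R, Complex.exp (Complex.I * (a * t))‖ ≤ 2 / |a| := by
  have h1 : ∀ t : ℝ, Complex.I * (a * t) = (Complex.I * a) * t := fun t => by ring
  have hc : (Complex.I * a : ℂ) ≠ 0 := by
    simp [Complex.I_ne_zero, ha]
  have hle : c - R ≤ c + R := by linarith
  open intervalIntegral in
  have key : ∫ t in Metric.ball c R, Complex.exp (Complex.I * (a * t)) =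
      ∫ t in (c - R)..(c + R), Complex.exp ((Complex.I * a) * t) := by
    rw [Real.ball_eq_Ioo, integral_of_le hle, integral_Ioc_eq_integral_Ioo]
    simp_rw [h1]
  open intervalIntegral in
  rw [key, integral_exp_mul_complex hc]
  have hnorm : ∀ x : ℝ, ‖Complex.exp ((Complex.I * a) * x)‖ = 1 := by
    intro x
    rw [Complex.norm_exp]
    have : ((Complex.I * a) * x).re = 0 := by simp
    rw [this, Real.exp_zero]
  rw [norm_div]
  have h2 : ‖(Complex.I * a : ℂ)‖ = |a| := by
    rw [norm_mul, Complex.norm_I, one_mul, Complex.norm_real, Real.norm_eq_abs]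
  rw [h2]
  gcongr
  calc ‖Complex.exp ((Complex.I * a) * ((c + R : ℝ) : ℂ)) -
        Complex.exp ((Complex.I * a) * ((c - R : ℝ) : ℂ))‖
      ≤ ‖Complex.exp ((Complex.I * a) * ((c + R : ℝ) : ℂ))‖ +
        ‖Complex.exp ((Complex.I * a) * ((c - R : ℝ) : ℂ))‖ := norm_sub_le _ _
    _ ≤ 2 := by rw [hnorm, hnorm]; norm_num

lemma stmt11_oneD_triv (a c : ℝ) {R : ℝ} (hR : 0 < R) :
    ‖∫ t in Metric.ball c R, Complex.exp (Complex.I * (a * t))‖ ≤ 2 * R := by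
  have hvol : volume (Metric.ball c R) < ⊤ := by
    rw [Real.volume_ball]; exact ENNReal.ofReal_lt_top
  have := norm_setIntegral_le_of_norm_le_const (C := 1)
    (f := fun t : ℝ => Complex.exp (Complex.I * (a * t))) hvol
    (fun x _ => by
      rw [Complex.norm_exp]
      have : (Complex.I * (a * x)).re = 0 := by simp
      rw [this, Real.exp_zero])
  calc ‖∫ t in Metric.ball c R, Complex.exp (Complex.I * (a * t))‖
      ≤ 1 * (volume (Metric.ball c R)).toReal := this
    _ = 2 * R := by
        rw [one_mul, Real.volume_ball, ENNReal.toReal_ofReal (by linarith)]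

/-- The cube (sup-norm ball) oscillatory integral bound via Fubini. -/
lemma stmt11_cube_bound {n : ℕ} (a : Fin n → ℝ) (j : Fin n) (hj : a j ≠ 0)
    (H₀ : Fin n → ℝ) {R : ℝ} (hR : 0 < R) :
    ‖∫ H in Metric.ball H₀ R, Complex.exp (Complex.I * ∑ i, a i * H i)‖ ≤
      2 / |a j| * (2 * R) ^ (n - 1) := by
  have hball : Metric.ball H₀ R = Set.univ.pi fun i => Metric.ball (H₀ i) R := ball_pi _ hR
  have hfact : (Set.indicator (Metric.ball H₀ R)
        fun H : Fin n → ℝ => Complex.exp (Complex.I * ∑ i, a i * H i)) =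
      fun H => ∏ i, Set.indicator (Metric.ball (H₀ i) R)
        (fun t : ℝ => Complex.exp (Complex.I * (a i * t))) (H i) := by
    funext H
    by_cases h : H ∈ Metric.ball H₀ R
    · rw [Set.indicator_of_mem h]
      have h' : ∀ i, H i ∈ Metric.ball (H₀ i) R := by
        rw [hball, Set.mem_univ_pi] at h; exact h
      push_cast
      rw [Finset.mul_sum, Complex.exp_sum]
      exact Finset.prod_congr rfl fun i _ => (Set.indicator_of_mem (h' i) (fun t : ℝ => Complex.exp (Complex.I * (a i * t)))).symm
    · rw [Set.indicator_of_notMem h]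
      have h' : ∃ i, H i ∉ Metric.ball (H₀ i) R := by
        by_contra hc
        push_neg at hc
        exact h (hball ▸ Set.mem_univ_pi.mpr hc)
      obtain ⟨i, hi⟩ := h'
      symm
      apply Finset.prod_eq_zero (Finset.mem_univ i)
      rw [Set.indicator_of_notMem hi]
  rw [← MeasureTheory.integral_indicator measurableSet_ball, hfact,
    MeasureTheory.integral_fintype_prod_volume_eq_prod
      (fun i t => Set.indicator (Metric.ball (H₀ i) R)
        (fun s : ℝ => Complex.exp (Complex.I * (a i * s))) t)]
  have heach : ∀ i, (∫ t : ℝ, Set.indicator (Metric.ball (H₀ i) R)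
        (fun s : ℝ => Complex.exp (Complex.I * (a i * s))) t) =
      ∫ t in Metric.ball (H₀ i) R, Complex.exp (Complex.I * (a i * t)) :=
    fun i => MeasureTheory.integral_indicator measurableSet_ball
  rw [norm_prod]
  simp_rw [heach]
  rw [← Finset.mul_prod_erase Finset.univ _ (Finset.mem_univ j)]
  have hbound2 : ∀ i ∈ Finset.univ.erase j,
      ‖∫ t in Metric.ball (H₀ i) R, Complex.exp (Complex.I * (a i * t))‖ ≤ 2 * R :=
    fun i _ => stmt11_oneD_triv (a i) (H₀ i) hR
  calc ‖∫ t in Metric.ball (H₀ j) R, Complex.exp (Complex.I * (a j * t))‖ *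
        ∏ i ∈ Finset.univ.erase j,
          ‖∫ t in Metric.ball (H₀ i) R, Complex.exp (Complex.I * (a i * t))‖
      ≤ (2 / |a j|) * ∏ i ∈ Finset.univ.erase j, (2 * R) := by
        apply mul_le_mul (stmt11_oneD_bound (a j) (H₀ j) hj hR)
          (Finset.prod_le_prod (fun i _ => norm_nonneg _) hbound2)
          (Finset.prod_nonneg fun i _ => norm_nonneg _)
          (by positivity)
    _ = 2 / |a j| * (2 * R) ^ (n - 1) := by
        rw [Finset.prod_const, Finset.card_erase_of_mem (Finset.mem_univ j),
          Finset.card_univ, Fintype.card_fin]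

lemma stmt11chi_q {m n : ℕ} (Q : (Fin n → ℝ) →ₗ[ℝ] (Fin m → ℝ)) (k : Fin m → ℤ) (H : Fin n → ℝ) :
    stmt11chi k (fun i => ((Q H i : ℝ) : AddCircle (2 * Real.pi))) =
      Complex.exp (Complex.I * ∑ j, (∑ i, (k i : ℝ) * Q (Pi.single j 1) i) * H j) := by
  classical
  have hne : ((2 * Real.pi : ℝ) : ℂ) ≠ 0 := Complex.ofReal_ne_zero.mpr (by positivity)
  have hstep : ∀ i, fourier (k i) (((Q H i : ℝ) : AddCircle (2 * Real.pi))) =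
      Complex.exp (Complex.I * ((k i : ℝ) * Q H i)) := by
    intro i
    rw [fourier_coe_apply]
    congr 1
    rw [div_eq_iff hne]
    push_cast
    ring
  rw [stmt11chi_apply]
  simp_rw [hstep]
  rw [← Complex.exp_sum]
  congr 1
  have hQ : ∀ i, Q H i = ∑ j, H j * Q (Pi.single j 1) i := by
    intro i
    conv_lhs => rw [← Finset.univ_sum_single H, map_sum]
    rw [Finset.sum_apply]
    refine Finset.sum_congr rfl fun j _ => ?_
    have h1 : Pi.single j (H j) = H j • (Pi.single j 1 : Fin n → ℝ) := by
      funext x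
      by_cases hx : x = j
      · subst hx; simp
      · simp [Pi.single_eq_of_ne hx]
    rw [h1, _root_.map_smul]
    simp [mul_comm]
  have hreal : ∑ i, (k i : ℝ) * Q H i =
      ∑ j, (∑ i, (k i : ℝ) * Q (Pi.single j 1) i) * H j := by
    calc ∑ i, (k i : ℝ) * Q H i
        = ∑ i, ∑ j, (k i : ℝ) * Q (Pi.single j 1) i * H j := by
          refine Finset.sum_congr rfl fun i _ => ?_
          rw [hQ i, Finset.mul_sum]
          exact Finset.sum_congr rfl fun j _ => by ring
      _ = ∑ j, ∑ i, (k i : ℝ) * Q (Pi.single j 1) i * H j := Finset.sum_comm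
      _ = ∑ j, (∑ i, (k i : ℝ) * Q (Pi.single j 1) i) * H j := by
          exact Finset.sum_congr rfl fun j _ => (Finset.sum_mul _ _ _).symm
  rw [← Finset.mul_sum]
  congr 1
  exact_mod_cast hreal

lemma stmt11_arith {n : ℕ} (hn : 0 < n) {aj R δ : ℝ} (haj : aj ≠ 0) (hR0 : 0 < R)
    (hδ : 0 < δ) (hRle : 1 / (|aj| * δ) ≤ R) :
    ((2 * R) ^ n)⁻¹ * (2 / |aj| * (2 * R) ^ (n - 1)) ≤ δ := by
  have haj' : 0 < |aj| := abs_pos.mpr haj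
  have h2R : (0:ℝ) < 2 * R := by linarith
  have hpow : (2 * R) ^ n = (2 * R) ^ (n - 1) * (2 * R) := by
    conv_lhs => rw [show n = (n - 1) + 1 from (Nat.succ_pred_eq_of_pos hn).symm]
    rw [pow_succ]
  have hp : (0:ℝ) < (2 * R) ^ (n - 1) := pow_pos h2R _
  have hkey : ((2 * R) ^ n)⁻¹ * (2 / |aj| * (2 * R) ^ (n - 1)) = 1 / (|aj| * R) := by
    rw [hpow]
    field_simp
  rw [hkey, div_le_iff₀ (by positivity)]
  rw [div_le_iff₀ (by positivity)] at hRle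
  nlinarith

end Stmt11Aux

set_option maxHeartbeats 1000000 in
/-- Let `T = ℝ^m/(2π)ℤ^m`, `Q : ℝ^n → ℝ^m` a linear map, `q : ℝ^n → T` the induced map, and
`T₀` the closure of `q(ℝ^n)` in `T`. Then `T₀` is a closed subgroup of `T` and for every
smooth (here: continuous) function `f` on `T`, the ball averages
`(1/vol B(H₀,R)) ∫_{B(H₀,R)} f(q(H)) dH` converge, as `R → ∞` and uniformly in `H₀`, to the
average of `f` over `T₀` with respect to its Haar probability measure. -/
theorem stmt11 (m n : ℕ) (Q : (Fin n → ℝ) →ₗ[ℝ] (Fin m → ℝ))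
    (q : (Fin n → ℝ) → (Fin m → AddCircle (2 * Real.pi)))
    (hq : ∀ H i, q H i = ((Q H i : ℝ) : AddCircle (2 * Real.pi))) :
    ∃ T₀ : AddSubgroup (Fin m → AddCircle (2 * Real.pi)),
      (T₀ : Set (Fin m → AddCircle (2 * Real.pi))) = closure (Set.range q) ∧
      IsClosed (T₀ : Set (Fin m → AddCircle (2 * Real.pi))) ∧
      ∀ f : (Fin m → AddCircle (2 * Real.pi)) → ℝ, Continuous f →
      ∀ μ : Measure T₀, μ.IsAddHaarMeasure → IsProbabilityMeasure μ →
      ∀ ε > 0, ∃ R₀ : ℝ, ∀ R ≥ R₀, ∀ H₀ : Fin n → ℝ,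
        |(volume (Metric.ball H₀ R)).toReal⁻¹ *
            (∫ H in Metric.ball H₀ R, f (q H)) -
          ∫ x : T₀, f (x : Fin m → AddCircle (2 * Real.pi)) ∂μ| < ε := by
  classical
  have hq_add : ∀ H H' : Fin n → ℝ, q (H + H') = q H + q H' := by
    intro H H'
    funext i
    simp only [Pi.add_apply, hq, map_add]
    rfl
  have hQc : Continuous fun H : Fin n → ℝ => Q H := Q.continuous_of_finiteDimensional
  have hqc : Continuous q := by
    have hqe : q = fun H => fun i => ((Q H i : ℝ) : AddCircle (2 * Real.pi)) := by
      funext H i; exact hq H i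
    rw [hqe]
    exact continuous_pi fun i =>
      (AddCircle.continuous_mk' (2 * Real.pi)).comp ((continuous_apply i).comp hQc)
  set φ : (Fin n → ℝ) →+ (Fin m → AddCircle (2 * Real.pi)) := AddMonoidHom.mk' q hq_add with hφ
  set T₀ : AddSubgroup (Fin m → AddCircle (2 * Real.pi)) := φ.range.topologicalClosure with hT₀def
  have hcoe : (T₀ : Set (Fin m → AddCircle (2 * Real.pi))) = closure (Set.range q) := by
    rw [hT₀def, AddSubgroup.topologicalClosure_coe, AddMonoidHom.coe_range, hφ]
    rfl
  have hclosed : IsClosed (T₀ : Set (Fin m → AddCircle (2 * Real.pi))) :=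
    AddSubgroup.isClosed_topologicalClosure _
  refine ⟨T₀, hcoe, hclosed, ?_⟩
  intro f hf μ hμ hprob ε hε
  haveI := hμ.toIsAddLeftInvariant
  haveI := hprob
  haveI : BorelSpace T₀ := Subtype.borelSpace {x | x ∈ T₀}
  haveI : CompactSpace T₀ := isCompact_iff_compactSpace.mp hclosed.isCompact
  have hqmem : ∀ H, q H ∈ T₀ := by
    intro H
    have h2 : q H ∈ (T₀ : Set (Fin m → AddCircle (2 * Real.pi))) := by
      rw [hcoe]; exact subset_closure ⟨H, rfl⟩
    exact h2
  -- volume facts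
  have hVol : ∀ {R : ℝ}, 0 < R → ∀ H₀ : Fin n → ℝ,
      (volume (Metric.ball H₀ R)).toReal = (2 * R) ^ n := by
    intro R hR H₀
    rw [Real.volume_pi_ball _ hR, Fintype.card_fin, ENNReal.toReal_ofReal (by positivity)]
  have hVolpos : ∀ {R : ℝ}, 0 < R → ∀ H₀ : Fin n → ℝ,
      0 < (volume (Metric.ball H₀ R)).toReal := by
    intro R hR H₀; rw [hVol hR]; positivity
  have hVollt : ∀ (H₀ : Fin n → ℝ) (R : ℝ), volume (Metric.ball H₀ R) < ⊤ := by
    intro H₀ R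
    rcases le_or_gt R 0 with h | h
    · rw [Metric.ball_eq_empty.mpr h]; simp
    · rw [Real.volume_pi_ball _ h]; exact ENNReal.ofReal_lt_top
  have hIntBall : ∀ g : (Fin m → AddCircle (2 * Real.pi)) → ℂ, Continuous g →
      ∀ (R : ℝ) (H₀ : Fin n → ℝ),
      IntegrableOn (fun H => g (q H)) (Metric.ball H₀ R) volume := fun g hg R H₀ =>
    ((hg.comp hqc).continuousOn.integrableOn_compact (isCompact_closedBall H₀ R)).mono_set
      Metric.ball_subset_closedBall
  have hIntT₀ : ∀ g : (Fin m → AddCircle (2 * Real.pi)) → ℂ, Continuous g →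
      Integrable (fun x : T₀ => g ↑x) μ := fun g hg =>
    stmt11_integrable μ _ (hg.comp continuous_subtype_val)
  -- the key uniform convergence statement for trigonometric polynomials
  have key : ∀ g ∈ Submodule.span ℂ (Set.range (stmt11chi (m := m))),
      ∀ δ : ℝ, 0 < δ → ∃ R₀ : ℝ, 1 ≤ R₀ ∧ ∀ R ≥ R₀, ∀ H₀ : Fin n → ℝ,
      ‖(volume (Metric.ball H₀ R)).toReal⁻¹ • (∫ H in Metric.ball H₀ R, g (q H)) -
        ∫ x : T₀, g ↑x ∂μ‖ ≤ δ := by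
    intro g hg
    refine Submodule.span_induction ?_ ?_ ?_ ?_ hg
    · -- characters
      rintro g ⟨k, rfl⟩
      set a : Fin n → ℝ := fun j => ∑ i, (k i : ℝ) * Q (Pi.single j 1) i with ha_def
      have hchiq : ∀ H : Fin n → ℝ, stmt11chi k (q H) =
          Complex.exp (Complex.I * ((∑ j, a j * H j : ℝ) : ℂ)) := by
        intro H
        have hqH : q H = fun i => ((Q H i : ℝ) : AddCircle (2 * Real.pi)) :=
          funext fun i => hq H i
        rw [hqH]
        exact stmt11chi_q Q k H
      by_cases ha : ∀ j, a j = 0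
      · -- trivial character
        have h1 : ∀ H, stmt11chi k (q H) = 1 := by
          intro H; rw [hchiq]; simp [ha]
        have hT1 : ∀ x : T₀, stmt11chi k (x : Fin m → AddCircle (2 * Real.pi)) = 1 := by
          intro x
          have hx : (x : Fin m → AddCircle (2 * Real.pi)) ∈ closure (Set.range q) := by
            rw [← hcoe]; exact x.2
          have hsub : closure (Set.range q) ⊆ {y | stmt11chi k y = 1} := by
            apply closure_minimal ?_ (isClosed_eq (stmt11chi k).continuous continuous_const)
            rintro - ⟨H, rfl⟩; exact h1 H
          exact hsub hx
        intro δ hδ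
        refine ⟨1, le_rfl, fun R hR H₀ => ?_⟩
        have hR0 : (0 : ℝ) < R := lt_of_lt_of_le one_pos hR
        have e1 : (∫ H in Metric.ball H₀ R, stmt11chi k (q H)) =
            (((volume (Metric.ball H₀ R)).toReal : ℝ) : ℂ) * 1 := by
          simp_rw [h1]
          rw [setIntegral_const, Complex.real_smul]
          rfl
        have e2 : (∫ x : T₀, stmt11chi k (x : Fin m → AddCircle (2 * Real.pi)) ∂μ) = 1 := by
          simp_rw [hT1]
          rw [integral_const, probReal_univ, one_smul]
        rw [e1, e2, Complex.real_smul, mul_one, ← Complex.ofReal_mul,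
          inv_mul_cancel₀ (hVolpos hR0 H₀).ne', Complex.ofReal_one, sub_self, norm_zero]
        exact hδ.le
      · -- nontrivial character
        push_neg at ha
        obtain ⟨j, hj⟩ := ha
        have hsum : ∑ j', a j' * (Pi.single j (Real.pi / a j) : Fin n → ℝ) j' = Real.pi := by
          rw [Finset.sum_eq_single j]
          · rw [Pi.single_eq_same]; field_simp
          · intro b _ hb; rw [Pi.single_eq_of_ne hb, mul_zero]
          · intro hj'; exact absurd (Finset.mem_univ j) hj'
        have hval : stmt11chi k (q (Pi.single j (Real.pi / a j))) = -1 := by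
          rw [hchiq, hsum, show Complex.I * ((Real.pi : ℝ) : ℂ) =
            ((Real.pi : ℝ) : ℂ) * Complex.I from mul_comm _ _, Complex.exp_pi_mul_I]
        have hzero : (∫ x : T₀, stmt11chi k (x : Fin m → AddCircle (2 * Real.pi)) ∂μ) = 0 := by
          refine stmt11_char_integral_zero μ _ ?_ ⟨_, hqmem (Pi.single j (Real.pi / a j))⟩ ?_
          · intro x y
            show stmt11chi k ((x : Fin m → AddCircle (2 * Real.pi)) + y) = _
            rw [stmt11chi_apply_add]
          · show stmt11chi k (q (Pi.single j (Real.pi / a j))) ≠ 1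
            rw [hval]
            intro h
            have : (1 : ℂ) = -1 := h.symm
            norm_num at this
        intro δ hδ
        refine ⟨max 1 (1 / (|a j| * δ)), le_max_left _ _, fun R hR H₀ => ?_⟩
        have hR1 : (1 : ℝ) ≤ R := le_trans (le_max_left _ _) hR
        have hR0 : (0 : ℝ) < R := lt_of_lt_of_le one_pos hR1
        rw [hzero, sub_zero]
        have hInt : (∫ H in Metric.ball H₀ R, stmt11chi k (q H)) =
            ∫ H in Metric.ball H₀ R, Complex.exp (Complex.I * ∑ i, a i * H i) := by
          simp_rw [hchiq]
        rw [hInt, norm_smul, Real.norm_eq_abs, abs_of_pos (inv_pos.mpr (hVolpos hR0 H₀))]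
        have hb := stmt11_cube_bound a j hj H₀ hR0
        have hn : 0 < n := lt_of_le_of_lt (Nat.zero_le _) j.2
        have hRle : 1 / (|a j| * δ) ≤ R := le_trans (le_max_right _ _) hR
        have step1 : (volume (Metric.ball H₀ R)).toReal⁻¹ *
              ‖∫ H in Metric.ball H₀ R, Complex.exp (Complex.I * ∑ i, a i * H i)‖
            ≤ (volume (Metric.ball H₀ R)).toReal⁻¹ * (2 / |a j| * (2 * R) ^ (n - 1)) :=
          mul_le_mul_of_nonneg_left hb (by positivity)
        refine le_trans step1 ?_
        rw [hVol hR0]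
        exact stmt11_arith hn hj hR0 hδ hRle
    · -- zero
      intro δ hδ
      refine ⟨1, le_rfl, fun R hR H₀ => ?_⟩
      simp only [ContinuousMap.coe_zero, Pi.zero_apply, integral_zero, smul_zero, sub_self,
        norm_zero]
      exact hδ.le
    · -- add
      intro x y hx hy ihx ihy δ hδ
      obtain ⟨R₁, hR₁, h₁⟩ := ihx (δ / 2) (by positivity)
      obtain ⟨R₂, hR₂, h₂⟩ := ihy (δ / 2) (by positivity)
      refine ⟨max R₁ R₂, le_trans hR₁ (le_max_left _ _), fun R hR H₀ => ?_⟩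
      have e1 : (∫ H in Metric.ball H₀ R, (x + y) (q H)) =
          (∫ H in Metric.ball H₀ R, x (q H)) + ∫ H in Metric.ball H₀ R, y (q H) := by
        simp_rw [ContinuousMap.add_apply]
        exact integral_add (hIntBall x x.continuous R H₀) (hIntBall y y.continuous R H₀)
      have e2 : (∫ z : T₀, (x + y) (z : Fin m → AddCircle (2 * Real.pi)) ∂μ) =
          (∫ z : T₀, x (z : Fin m → AddCircle (2 * Real.pi)) ∂μ) +
            ∫ z : T₀, y (z : Fin m → AddCircle (2 * Real.pi)) ∂μ := by
        simp_rw [ContinuousMap.add_apply]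
        exact integral_add (hIntT₀ x x.continuous) (hIntT₀ y y.continuous)
      rw [e1, e2, smul_add, add_sub_add_comm]
      refine le_trans (norm_add_le _ _) ?_
      have b1 := h₁ R (le_trans (le_max_left _ _) hR) H₀
      have b2 := h₂ R (le_trans (le_max_right _ _) hR) H₀
      linarith
    · -- smul
      intro c x hx ih δ hδ
      obtain ⟨R₁, hR₁, h₁⟩ := ih (δ / (‖c‖ + 1)) (by positivity)
      refine ⟨R₁, hR₁, fun R hR H₀ => ?_⟩
      have e1 : (∫ H in Metric.ball H₀ R, (c • x) (q H)) =
          c • ∫ H in Metric.ball H₀ R, x (q H) := by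
        simp_rw [ContinuousMap.smul_apply]
        exact integral_smul c _
      have e2 : (∫ z : T₀, (c • x) (z : Fin m → AddCircle (2 * Real.pi)) ∂μ) =
          c • ∫ z : T₀, x (z : Fin m → AddCircle (2 * Real.pi)) ∂μ := by
        simp_rw [ContinuousMap.smul_apply]
        exact integral_smul c _
      rw [e1, e2, smul_comm ((volume (Metric.ball H₀ R)).toReal⁻¹) c, ← smul_sub, norm_smul]
      have h := h₁ R hR H₀
      have h2 : ‖c‖ * ‖(volume (Metric.ball H₀ R)).toReal⁻¹ •
            (∫ H in Metric.ball H₀ R, x (q H)) -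
          ∫ z : T₀, x (z : Fin m → AddCircle (2 * Real.pi)) ∂μ‖ ≤
          (‖c‖ + 1) * (δ / (‖c‖ + 1)) := by
        apply mul_le_mul (by linarith [norm_nonneg c]) h (norm_nonneg _) (by positivity)
      refine le_trans h2 ?_
      rw [mul_comm, div_mul_cancel₀ _ (by positivity : (‖c‖ : ℝ) + 1 ≠ 0)]
  -- now approximate f
  set fC : C(Fin m → AddCircle (2 * Real.pi), ℂ) :=
    ⟨fun x => (f x : ℂ), Complex.continuous_ofReal.comp hf⟩ with hfC
  obtain ⟨g, hgspan, hgdist⟩ : ∃ g ∈ Submodule.span ℂ (Set.range (stmt11chi (m := m))),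
      ‖fC - g‖ < ε / 4 := by
    have hmem : fC ∈ closure ((Submodule.span ℂ (Set.range (stmt11chi (m := m)))) :
        Set C(Fin m → AddCircle (2 * Real.pi), ℂ)) := by
      rw [← Submodule.topologicalClosure_coe, stmt11_span_dense m]
      trivial
    obtain ⟨g, hg1, hg2⟩ := Metric.mem_closure_iff.mp hmem (ε / 4) (by positivity)
    exact ⟨g, hg1, by rwa [← dist_eq_norm]⟩
  obtain ⟨R₀, hR₀1, hKey⟩ := key g hgspan (ε / 4) (by positivity)
  refine ⟨R₀, fun R hR H₀ => ?_⟩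
  have hR0 : (0 : ℝ) < R := lt_of_lt_of_le one_pos (le_trans hR₀1 hR)
  have hVpos : 0 < (volume (Metric.ball H₀ R)).toReal := hVolpos hR0 H₀
  have hbridge : ((((volume (Metric.ball H₀ R)).toReal⁻¹ *
        (∫ H in Metric.ball H₀ R, f (q H)) -
        ∫ x : T₀, f (x : Fin m → AddCircle (2 * Real.pi)) ∂μ : ℝ)) : ℂ) =
      ((volume (Metric.ball H₀ R)).toReal⁻¹ • (∫ H in Metric.ball H₀ R, fC (q H)) -
        ∫ x : T₀, fC (x : Fin m → AddCircle (2 * Real.pi)) ∂μ) := by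
    have b1 : (∫ H in Metric.ball H₀ R, fC (q H)) =
        (((∫ H in Metric.ball H₀ R, f (q H)) : ℝ) : ℂ) := by
      simp only [hfC, ContinuousMap.coe_mk]
      exact integral_ofReal
    have b2 : (∫ x : T₀, fC (x : Fin m → AddCircle (2 * Real.pi)) ∂μ) =
        (((∫ x : T₀, f (x : Fin m → AddCircle (2 * Real.pi)) ∂μ) : ℝ) : ℂ) := by
      simp only [hfC, ContinuousMap.coe_mk]
      exact integral_ofReal
    rw [b1, b2, Complex.real_smul]
    push_cast
    ring
  rw [← Real.norm_eq_abs, ← Complex.norm_real, hbridge]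
  have t1 : ‖(volume (Metric.ball H₀ R)).toReal⁻¹ • (∫ H in Metric.ball H₀ R, fC (q H)) -
      (volume (Metric.ball H₀ R)).toReal⁻¹ • (∫ H in Metric.ball H₀ R, g (q H))‖ < ε / 4 := by
    rw [← smul_sub]
    have e : (∫ H in Metric.ball H₀ R, fC (q H)) - (∫ H in Metric.ball H₀ R, g (q H)) =
        ∫ H in Metric.ball H₀ R, (fC - g) (q H) := by
      simp_rw [ContinuousMap.sub_apply]
      exact (integral_sub (hIntBall fC fC.continuous R H₀) (hIntBall g g.continuous R H₀)).symm
    rw [e, norm_smul, Real.norm_eq_abs, abs_of_pos (inv_pos.mpr hVpos)]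
    have hbnd : ‖∫ H in Metric.ball H₀ R, (fC - g) (q H)‖ ≤
        ‖fC - g‖ * (volume (Metric.ball H₀ R)).toReal := by
      refine norm_setIntegral_le_of_norm_le_const (hVollt H₀ R) ?_
      · intro x _
        exact ContinuousMap.norm_coe_le_norm (fC - g) (q x)
    calc (volume (Metric.ball H₀ R)).toReal⁻¹ * ‖∫ H in Metric.ball H₀ R, (fC - g) (q H)‖
        ≤ (volume (Metric.ball H₀ R)).toReal⁻¹ *
            (‖fC - g‖ * (volume (Metric.ball H₀ R)).toReal) :=
          mul_le_mul_of_nonneg_left hbnd (by positivity)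
      _ = ‖fC - g‖ := by field_simp
      _ < ε / 4 := hgdist
  have t2 := hKey R hR H₀
  have t3 : ‖(∫ x : T₀, g (x : Fin m → AddCircle (2 * Real.pi)) ∂μ) -
      ∫ x : T₀, fC (x : Fin m → AddCircle (2 * Real.pi)) ∂μ‖ < ε / 4 := by
    have e : (∫ x : T₀, g (x : Fin m → AddCircle (2 * Real.pi)) ∂μ) -
        (∫ x : T₀, fC (x : Fin m → AddCircle (2 * Real.pi)) ∂μ) =
        ∫ x : T₀, (g - fC) (x : Fin m → AddCircle (2 * Real.pi)) ∂μ := by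
      simp_rw [ContinuousMap.sub_apply]
      exact (integral_sub (hIntT₀ g g.continuous) (hIntT₀ fC fC.continuous)).symm
    rw [e]
    have hbnd : ‖∫ x : T₀, (g - fC) (x : Fin m → AddCircle (2 * Real.pi)) ∂μ‖ ≤
        ‖g - fC‖ * (μ Set.univ).toReal :=
      norm_integral_le_of_norm_le_const (Filter.Eventually.of_forall fun x =>
        ContinuousMap.norm_coe_le_norm (g - fC) _)
    rw [measure_univ, ENNReal.toReal_one, mul_one] at hbnd
    calc ‖∫ x : T₀, (g - fC) (x : Fin m → AddCircle (2 * Real.pi)) ∂μ‖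
        ≤ ‖g - fC‖ := hbnd
      _ = ‖fC - g‖ := norm_sub_rev _ _
      _ < ε / 4 := hgdist
  have hsplit : (volume (Metric.ball H₀ R)).toReal⁻¹ • (∫ H in Metric.ball H₀ R, fC (q H)) -
      ∫ x : T₀, fC (x : Fin m → AddCircle (2 * Real.pi)) ∂μ =
      ((volume (Metric.ball H₀ R)).toReal⁻¹ • (∫ H in Metric.ball H₀ R, fC (q H)) -
        (volume (Metric.ball H₀ R)).toReal⁻¹ • (∫ H in Metric.ball H₀ R, g (q H))) +
      ((volume (Metric.ball H₀ R)).toReal⁻¹ • (∫ H in Metric.ball H₀ R, g (q H)) -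
        ∫ x : T₀, g (x : Fin m → AddCircle (2 * Real.pi)) ∂μ) +
      ((∫ x : T₀, g (x : Fin m → AddCircle (2 * Real.pi)) ∂μ) -
        ∫ x : T₀, fC (x : Fin m → AddCircle (2 * Real.pi)) ∂μ) := by
    abel
  rw [hsplit]
  calc ‖_ + _ + _‖ ≤ ‖_‖ + ‖_‖ + ‖_‖ := norm_add₃_le
    _ < ε := by linarith
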